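/- Let initial data ρ_{o,j} ∈ L∞(ℝ; [0,1]) for j = 1,…,M, and assume the CFL condition λ·𝒱 ≤ 1/2. Then all values ρ^n_{j,k} (and the intermediate values ρ^{n+1/2}_{j,k}) produced by the Godunov scheme with operator splitting lie in the interval [0,1]; in particular, the set [0,1]^M is invariant for the scheme. -/

import Mathlib

open scoped BigOperators ENNReal
open MeasureTheory

noncomputable def src (M : ℕ) (v : ℕ → ℝ → ℝ) (j : ℕ) (u w U W : ℝ) : ℝ :=
  if 1 ≤ j ∧ j + 1 ≤ M then
    max (v (j + 1) W - v j U) 0 * u * (1 - w)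
      - max (-(v (j + 1) W - v j U)) 0 * w * (1 - u)
  else 0

noncomputable def numFlux (v : ℕ → ℝ → ℝ) (θ : ℕ → ℝ) (j : ℕ) (u w : ℝ) : ℝ :=
  min (min u (θ j) * v j (min u (θ j))) (max w (θ j) * v j (max w (θ j)))

noncomputable def gam (dx : ℝ) (w : ℝ → ℝ) (h : ℤ) : ℝ :=
  ∫ y in ((h : ℝ) * dx)..(((h : ℝ) + 1) * dx), w y

noncomputable def Hset (dx : ℝ) (w : ℝ → ℝ) : Finset ℤ :=
  Finset.Icc ⌊sInf (tsupport w) / dx⌋ (⌊sSup (tsupport w) / dx⌋ - 1)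

noncomputable def dconv (dx : ℝ) (w : ℝ → ℝ) (r : ℤ → ℝ) (k : ℤ) : ℝ :=
  ∑ h ∈ Hset dx w, gam dx w h * r (k + h + 1)

lemma myGam_nonneg {dx : ℝ} (hdx : 0 < dx) {w : ℝ → ℝ} (hw : ∀ x, 0 ≤ w x) (h : ℤ) :
    0 ≤ gam dx w h :=
  intervalIntegral.integral_nonneg (by nlinarith) (fun x _ => hw x)

lemma mySum_gam_le_one {dx : ℝ} (hdx : 0 < dx) {w : ℝ → ℝ}
    (hw : ∀ x, 0 ≤ w x) (hint : ∫ x, w x = 1) (s : Finset ℤ) :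
    ∑ h ∈ s, gam dx w h ≤ 1 := by
  have hInt : Integrable w := by
    by_contra h
    rw [MeasureTheory.integral_undef h] at hint; norm_num at hint
  have key : ∀ h : ℤ, gam dx w h = ∫ y in Set.Ioc ((h:ℝ)*dx) (((h:ℝ)+1)*dx), w y := by
    intro h
    rw [gam, intervalIntegral.integral_of_le (by nlinarith)]
  have hdisj : Set.Pairwise (↑s) (Function.onFun Disjoint
      (fun h : ℤ => Set.Ioc ((h:ℝ)*dx) (((h:ℝ)+1)*dx))) := by
    intro a _ b _ hab
    simp only [Function.onFun]
    rw [Set.Ioc_disjoint_Ioc]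
    rcases lt_or_gt_of_ne hab with h | h
    · have h1 : (a:ℝ) + 1 ≤ b := by exact_mod_cast h
      calc min (((a:ℝ)+1)*dx) (((b:ℝ)+1)*dx) ≤ ((a:ℝ)+1)*dx := min_le_left _ _
        _ ≤ (b:ℝ)*dx := by nlinarith
        _ ≤ max ((a:ℝ)*dx) ((b:ℝ)*dx) := le_max_right _ _
    · have h1 : (b:ℝ) + 1 ≤ a := by exact_mod_cast h
      calc min (((a:ℝ)+1)*dx) (((b:ℝ)+1)*dx) ≤ ((b:ℝ)+1)*dx := min_le_right _ _
        _ ≤ (a:ℝ)*dx := by nlinarith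
        _ ≤ max ((a:ℝ)*dx) ((b:ℝ)*dx) := le_max_left _ _
  calc ∑ h ∈ s, gam dx w h
      = ∫ y in ⋃ h ∈ s, Set.Ioc ((h:ℝ)*dx) (((h:ℝ)+1)*dx), w y := by
        rw [MeasureTheory.integral_biUnion_finset s (fun i _ => measurableSet_Ioc) hdisj
          (fun i _ => hInt.integrableOn)]
        exact Finset.sum_congr rfl fun h _ => key h
    _ ≤ ∫ y, w y := MeasureTheory.setIntegral_le_integral hInt (Filter.Eventually.of_forall hw)
    _ = 1 := hint

lemma myDconv_mem {dx : ℝ} (hdx : 0 < dx) {w : ℝ → ℝ}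
    (hw : ∀ x, 0 ≤ w x) (hint : ∫ x, w x = 1) {r : ℤ → ℝ}
    (hr : ∀ k, r k ∈ Set.Icc (0:ℝ) 1) (k : ℤ) :
    dconv dx w r k ∈ Set.Icc (0:ℝ) 1 := by
  constructor
  · exact Finset.sum_nonneg fun h _ => mul_nonneg (myGam_nonneg hdx hw h) (hr _).1
  · calc ∑ h ∈ Hset dx w, gam dx w h * r (k+h+1)
        ≤ ∑ h ∈ Hset dx w, gam dx w h := Finset.sum_le_sum fun h _ =>
          mul_le_of_le_one_right (myGam_nonneg hdx hw h) (hr _).2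
    _ ≤ 1 := mySum_gam_le_one hdx hw hint _

lemma mySrc_bounds_w (M j : ℕ) (v : ℕ → ℝ → ℝ) (u w U W K : ℝ) (hK : 0 ≤ K)
    (hw0 : 0 ≤ w) (hw1 : w ≤ 1)
    (hc : 1 ≤ j → j + 1 ≤ M →
      0 ≤ u ∧ u ≤ 1 ∧ 0 ≤ v j U ∧ v j U ≤ K ∧ 0 ≤ v (j+1) W ∧ v (j+1) W ≤ K) :
    -(K * w) ≤ src M v j u w U W ∧ src M v j u w U W ≤ K * (1 - w) := by
  unfold src
  split_ifs with h
  · obtain ⟨hu0, hu1, hv0, hv1, hv2, hv3⟩ := hc h.1 h.2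
    have h3 : 0 ≤ max (v (j+1) W - v j U) 0 := le_max_right _ _
    have h4 : max (v (j+1) W - v j U) 0 ≤ K := max_le (by linarith) hK
    have h5 : 0 ≤ max (-(v (j+1) W - v j U)) 0 := le_max_right _ _
    have h6 : max (-(v (j+1) W - v j U)) 0 ≤ K := max_le (by linarith) hK
    have hcu : max (v (j+1) W - v j U) 0 * u ≤ K := by
      nlinarith [mul_nonneg h3 (by linarith : (0:ℝ) ≤ 1 - u)]
    constructor
    · nlinarith [mul_nonneg hw0 (by linarith : (0:ℝ) ≤ K - max (-(v (j+1) W - v j U)) 0),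
        mul_nonneg (mul_nonneg h5 hw0) hu0,
        mul_nonneg (mul_nonneg h3 hu0) (by linarith : (0:ℝ) ≤ 1 - w)]
    · nlinarith [mul_nonneg (by linarith : (0:ℝ) ≤ K - max (v (j+1) W - v j U) 0 * u)
          (by linarith : (0:ℝ) ≤ 1 - w),
        mul_nonneg (mul_nonneg h5 hw0) (by linarith : (0:ℝ) ≤ 1 - u)]
  · constructor <;> nlinarith

lemma mySrc_bounds_u (M j : ℕ) (v : ℕ → ℝ → ℝ) (u w U W K : ℝ) (hK : 0 ≤ K)
    (hu0 : 0 ≤ u) (hu1 : u ≤ 1)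
    (hc : 1 ≤ j → j + 1 ≤ M →
      0 ≤ w ∧ w ≤ 1 ∧ 0 ≤ v j U ∧ v j U ≤ K ∧ 0 ≤ v (j+1) W ∧ v (j+1) W ≤ K) :
    -(K * (1 - u)) ≤ src M v j u w U W ∧ src M v j u w U W ≤ K * u := by
  unfold src
  split_ifs with h
  · obtain ⟨hw0, hw1, hv0, hv1, hv2, hv3⟩ := hc h.1 h.2
    have h3 : 0 ≤ max (v (j+1) W - v j U) 0 := le_max_right _ _
    have h4 : max (v (j+1) W - v j U) 0 ≤ K := max_le (by linarith) hK
    have h5 : 0 ≤ max (-(v (j+1) W - v j U)) 0 := le_max_right _ _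
    have h6 : max (-(v (j+1) W - v j U)) 0 ≤ K := max_le (by linarith) hK
    have hcw : max (-(v (j+1) W - v j U)) 0 * w ≤ K := by
      nlinarith [mul_nonneg h5 (by linarith : (0:ℝ) ≤ 1 - w)]
    have hcw2 : max (v (j+1) W - v j U) 0 * (1 - w) ≤ K := by
      nlinarith [mul_nonneg h3 hw0]
    constructor
    · nlinarith [mul_nonneg (by linarith : (0:ℝ) ≤ K - max (-(v (j+1) W - v j U)) 0 * w)
          (by linarith : (0:ℝ) ≤ 1 - u),
        mul_nonneg (mul_nonneg h3 hu0) (by linarith : (0:ℝ) ≤ 1 - w)]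
    · nlinarith [mul_nonneg hu0
          (by linarith : (0:ℝ) ≤ K - max (v (j+1) W - v j U) 0 * (1 - w)),
        mul_nonneg (mul_nonneg h5 hw0) (by linarith : (0:ℝ) ≤ 1 - u)]
  · constructor <;> nlinarith

lemma myRelax (u S1 S2 dt K : ℝ) (hu0 : 0 ≤ u) (hu1 : u ≤ 1) (hdt : 0 ≤ dt)
    (hK : 2 * dt * K ≤ 1)
    (h1l : -(K * u) ≤ S1) (h1u : S1 ≤ K * (1 - u))
    (h2l : -(K * (1 - u)) ≤ S2) (h2u : S2 ≤ K * u) :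
    u + dt * S1 - dt * S2 ∈ Set.Icc (0:ℝ) 1 := by
  constructor
  · nlinarith [mul_nonneg hdt (by linarith : 0 ≤ S1 + K*u),
      mul_nonneg hdt (by linarith : 0 ≤ K*u - S2)]
  · nlinarith [mul_nonneg hdt (by linarith : 0 ≤ K*(1-u) - S1),
      mul_nonneg hdt (by linarith : 0 ≤ S2 + K*(1-u))]

lemma myConv_step (v : ℕ → ℝ → ℝ) (θ : ℕ → ℝ) (j : ℕ) (lam l u r Vm V'm : ℝ)
    (hl : l ∈ Set.Icc (0:ℝ) 1) (hu : u ∈ Set.Icc (0:ℝ) 1) (hr : r ∈ Set.Icc (0:ℝ) 1)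
    (hθ : θ j ∈ Set.Icc (0:ℝ) 1)
    (hvnn : ∀ x ∈ Set.Icc (0:ℝ) 1, 0 ≤ v j x)
    (hVm : ∀ x ∈ Set.Icc (0:ℝ) 1, v j x ≤ Vm)
    (hup : ∀ x ∈ Set.Icc (0:ℝ) 1, v j x ≤ V'm * (1 - x))
    (hV'm : 0 ≤ V'm)
    (hlam0 : 0 ≤ lam) (h1 : lam * Vm ≤ 1) (h2 : lam * V'm ≤ 1) :
    u - lam * (numFlux v θ j u r - numFlux v θ j l u) ∈ Set.Icc (0:ℝ) 1 := by
  obtain ⟨hl0, hl1⟩ := hl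
  obtain ⟨hu0, hu1⟩ := hu
  obtain ⟨hr0, hr1⟩ := hr
  obtain ⟨hθ0, hθ1⟩ := hθ
  have memmin : ∀ a b : ℝ, a ∈ Set.Icc (0:ℝ) 1 → b ∈ Set.Icc (0:ℝ) 1 →
      min a b ∈ Set.Icc (0:ℝ) 1 := fun a b ha hb =>
    ⟨le_min ha.1 hb.1, le_trans (min_le_left _ _) ha.2⟩
  have memmax : ∀ a b : ℝ, a ∈ Set.Icc (0:ℝ) 1 → b ∈ Set.Icc (0:ℝ) 1 →
      max a b ∈ Set.Icc (0:ℝ) 1 := fun a b ha hb =>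
    ⟨le_trans ha.1 (le_max_left _ _), max_le ha.2 hb.2⟩
  have hFnn : ∀ a b : ℝ, a ∈ Set.Icc (0:ℝ) 1 → b ∈ Set.Icc (0:ℝ) 1 →
      0 ≤ numFlux v θ j a b := by
    intro a b ha hb
    have h1 := memmin a (θ j) ha ⟨hθ0, hθ1⟩
    have h2 := memmax b (θ j) hb ⟨hθ0, hθ1⟩
    exact le_min (mul_nonneg h1.1 (hvnn _ h1)) (mul_nonneg h2.1 (hvnn _ h2))
  have hF1 : numFlux v θ j u r ≤ u * Vm := by
    have hm := memmin u (θ j) ⟨hu0, hu1⟩ ⟨hθ0, hθ1⟩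
    calc numFlux v θ j u r ≤ min u (θ j) * v j (min u (θ j)) := min_le_left _ _
      _ ≤ u * Vm := by
        have := hVm _ hm
        have hv := hvnn _ hm
        have hmu : min u (θ j) ≤ u := min_le_left _ _
        nlinarith [hm.1]
  have hF2 : numFlux v θ j l u ≤ V'm * (1 - u) := by
    have hm := memmax u (θ j) ⟨hu0, hu1⟩ ⟨hθ0, hθ1⟩
    calc numFlux v θ j l u ≤ max u (θ j) * v j (max u (θ j)) := min_le_right _ _
      _ ≤ V'm * (1 - u) := by
        have h5 := hup _ hm
        have hv := hvnn _ hm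
        have hmu : u ≤ max u (θ j) := le_max_left _ _
        nlinarith [mul_nonneg (by linarith [hm.2] : (0:ℝ) ≤ 1 - max u (θ j)) hv,
          mul_nonneg hV'm (by linarith [hmu] : (0:ℝ) ≤ max u (θ j) - u)]
  have hA := hFnn u r ⟨hu0, hu1⟩ ⟨hr0, hr1⟩
  have hB := hFnn l u ⟨hl0, hl1⟩ ⟨hu0, hu1⟩
  constructor
  · nlinarith [mul_nonneg hlam0 hB, mul_le_mul_of_nonneg_left hF1 hlam0,
      mul_nonneg hu0 (by linarith : 0 ≤ 1 - lam * Vm)]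
  · nlinarith [mul_nonneg hlam0 hA, mul_le_mul_of_nonneg_left hF2 hlam0,
      mul_nonneg (by linarith : 0 ≤ 1 - u) (by linarith : 0 ≤ 1 - lam * V'm)]

theorem scheme_invariance
    (M : ℕ) (hM : 2 ≤ M)
    (v : ℕ → ℝ → ℝ) (θ : ℕ → ℝ)
    (dx dt ν Vmax V'max : ℝ)
    (w : ℝ → ℝ)
    (ρ₀ : ℕ → ℝ → ℝ) (ρ ρh : ℕ → ℕ → ℤ → ℝ)
    (hdx : dx ∈ Set.Ioo (0 : ℝ) 1) (hdt : 0 < dt) (hν : 0 < ν)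
    (hw_cont : ContinuousOn w (Set.Icc (-ν) ν))
    (hw_nonneg : ∀ x, 0 ≤ w x)
    (hw_supp : Function.support w ⊆ Set.Icc (-ν) ν)
    (hw_int : ∫ x, w x = 1)
    (hv_anti : ∀ j ∈ Finset.Icc 1 M, StrictAntiOn (v j) (Set.Icc (0 : ℝ) 1))
    (hv_nonneg : ∀ j ∈ Finset.Icc 1 M, ∀ x ∈ Set.Icc (0 : ℝ) 1, 0 ≤ v j x)
    (hv_one : ∀ j ∈ Finset.Icc 1 M, v j 1 = 0)
    (hVmax : ∀ j ∈ Finset.Icc 1 M, ∀ x ∈ Set.Icc (0 : ℝ) 1, |v j x| ≤ Vmax)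
    (hV'nonneg : 0 ≤ V'max)
    (hLip : ∀ j ∈ Finset.Icc 1 M,
      LipschitzOnWith (Real.toNNReal V'max) (v j) (Set.Icc (0 : ℝ) 1))
    (hθmem : ∀ j ∈ Finset.Icc 1 M, θ j ∈ Set.Icc (0 : ℝ) 1)
    (hθmax : ∀ j ∈ Finset.Icc 1 M, ∀ u ∈ Set.Icc (0 : ℝ) 1,
      u * v j u ≤ θ j * v j (θ j))
    (hθuniq : ∀ j ∈ Finset.Icc 1 M, ∀ u ∈ Set.Icc (0 : ℝ) 1,
      u * v j u = θ j * v j (θ j) → u = θ j)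
    (hCFL : dt / dx * (Vmax + V'max) ≤ 1 / 2)
    (hρ₀mem : ∀ j ∈ Finset.Icc 1 M, ∀ x, ρ₀ j x ∈ Set.Icc (0 : ℝ) 1)
    (hmeas : ∀ j ∈ Finset.Icc 1 M, Measurable (ρ₀ j))
    (hinit : ∀ j ∈ Finset.Icc 1 M, ∀ k : ℤ,
      ρ 0 j k = (∫ x in ((k : ℝ) * dx)..(((k : ℝ) + 1) * dx), ρ₀ j x) / dx)
    (hconv : ∀ n : ℕ, ∀ j ∈ Finset.Icc 1 M, ∀ k : ℤ,
      ρh n j k = ρ n j k - dt / dx *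
        (numFlux v θ j (ρ n j k) (ρ n j (k + 1))
          - numFlux v θ j (ρ n j (k - 1)) (ρ n j k)))
    (hrelax : ∀ n : ℕ, ∀ j ∈ Finset.Icc 1 M, ∀ k : ℤ,
      ρ (n + 1) j k = ρh n j k
        + dt * src M v (j - 1) (ρh n (j - 1) k) (ρh n j k)
            (dconv dx w (ρh n (j - 1)) k) (dconv dx w (ρh n j) k)
        - dt * src M v j (ρh n j k) (ρh n (j + 1) k)
            (dconv dx w (ρh n j) k) (dconv dx w (ρh n (j + 1)) k))
    :
    ∀ n : ℕ, ∀ j ∈ Finset.Icc 1 M, ∀ k : ℤ,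
      ρ n j k ∈ Set.Icc (0 : ℝ) 1 ∧ ρh n j k ∈ Set.Icc (0 : ℝ) 1 := by
  
  have hdx0 : 0 < dx := hdx.1
  have hdx1 : dx < 1 := hdx.2
  have hlam0 : 0 ≤ dt / dx := le_of_lt (div_pos hdt hdx0)
  have h1M : (1:ℕ) ∈ Finset.Icc 1 M := Finset.mem_Icc.mpr ⟨le_refl 1, by omega⟩
  have hVnn : 0 ≤ Vmax :=
    le_trans (abs_nonneg _) (hVmax 1 h1M 0 ⟨le_refl 0, zero_le_one⟩)
  have hlamV : dt / dx * Vmax ≤ 1 := by nlinarith [mul_nonneg hlam0 hV'nonneg]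
  have hlamV' : dt / dx * V'max ≤ 1 := by nlinarith [mul_nonneg hlam0 hVnn]
  have hdtK : 2 * dt * Vmax ≤ 1 := by
    have hdd : dt ≤ dt / dx := by
      rw [le_div_iff₀ hdx0]; nlinarith
    nlinarith [mul_nonneg hlam0 hV'nonneg, mul_le_mul_of_nonneg_right hdd hVnn]
  have hvle : ∀ j ∈ Finset.Icc 1 M, ∀ x ∈ Set.Icc (0:ℝ) 1, v j x ≤ Vmax :=
    fun j hj x hx => le_of_abs_le (hVmax j hj x hx)
  have hup : ∀ j ∈ Finset.Icc 1 M, ∀ x ∈ Set.Icc (0:ℝ) 1, v j x ≤ V'max * (1 - x) := by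
    intro j hj x hx
    have key := (hLip j hj).dist_le_mul x hx 1 ⟨zero_le_one, le_refl 1⟩
    rw [Real.dist_eq, Real.dist_eq, hv_one j hj, Real.coe_toNNReal _ hV'nonneg,
      sub_zero] at key
    have h2 : |x - 1| = 1 - x := by
      rw [abs_of_nonpos (by linarith [hx.2])]; ring
    rw [h2] at key
    exact le_trans (le_abs_self _) key
  have hbase : ∀ j ∈ Finset.Icc 1 M, ∀ k : ℤ, ρ 0 j k ∈ Set.Icc (0:ℝ) 1 := by
    intro j hj k
    rw [hinit j hj k]
    have hle : (k:ℝ) * dx ≤ ((k:ℝ)+1) * dx := by nlinarith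
    have hii : IntervalIntegrable (ρ₀ j) MeasureTheory.volume ((k:ℝ)*dx) (((k:ℝ)+1)*dx) := by
      rw [intervalIntegrable_iff_integrableOn_Ioc_of_le hle]
      apply MeasureTheory.Integrable.mono' (MeasureTheory.integrable_const 1)
        ((hmeas j hj).aestronglyMeasurable.restrict)
      filter_upwards with x
      rw [Real.norm_eq_abs, abs_le]
      exact ⟨by linarith [(hρ₀mem j hj x).1], (hρ₀mem j hj x).2⟩
    have h0 : 0 ≤ ∫ x in ((k:ℝ)*dx)..(((k:ℝ)+1)*dx), ρ₀ j x :=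
      intervalIntegral.integral_nonneg hle (fun x _ => (hρ₀mem j hj x).1)
    have h1 : (∫ x in ((k:ℝ)*dx)..(((k:ℝ)+1)*dx), ρ₀ j x) ≤ dx := by
      have hmono := intervalIntegral.integral_mono_on hle hii intervalIntegrable_const
        (fun x _ => (hρ₀mem j hj x).2)
      rw [intervalIntegral.integral_const, smul_eq_mul] at hmono
      nlinarith [hmono]
    exact ⟨div_nonneg h0 (le_of_lt hdx0), (div_le_one hdx0).mpr h1⟩
  have hconvmem : ∀ n, (∀ j ∈ Finset.Icc 1 M, ∀ k, ρ n j k ∈ Set.Icc (0:ℝ) 1) →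
      ∀ j ∈ Finset.Icc 1 M, ∀ k, ρh n j k ∈ Set.Icc (0:ℝ) 1 := by
    intro n hn j hj k
    rw [hconv n j hj k]
    exact myConv_step v θ j (dt/dx) (ρ n j (k-1)) (ρ n j k) (ρ n j (k+1)) Vmax V'max
      (hn j hj (k-1)) (hn j hj k) (hn j hj (k+1)) (hθmem j hj)
      (hv_nonneg j hj) (hvle j hj) (hup j hj) hV'nonneg hlam0 hlamV hlamV'
  have hrelaxmem : ∀ n, (∀ j ∈ Finset.Icc 1 M, ∀ k, ρh n j k ∈ Set.Icc (0:ℝ) 1) →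
      ∀ j ∈ Finset.Icc 1 M, ∀ k, ρ (n+1) j k ∈ Set.Icc (0:ℝ) 1 := by
    intro n hn j hj k
    rw [hrelax n j hj k]
    obtain ⟨hj1, hjM⟩ := Finset.mem_Icc.mp hj
    have hu := hn j hj k
    have hDj : ∀ j' ∈ Finset.Icc 1 M, dconv dx w (ρh n j') k ∈ Set.Icc (0:ℝ) 1 :=
      fun j' hj' => myDconv_mem hdx0 hw_nonneg hw_int (fun k' => hn j' hj' k') k
    have hc1 : 1 ≤ j - 1 → j - 1 + 1 ≤ M →
        0 ≤ ρh n (j-1) k ∧ ρh n (j-1) k ≤ 1 ∧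
        0 ≤ v (j-1) (dconv dx w (ρh n (j-1)) k) ∧
        v (j-1) (dconv dx w (ρh n (j-1)) k) ≤ Vmax ∧
        0 ≤ v (j-1+1) (dconv dx w (ρh n j) k) ∧
        v (j-1+1) (dconv dx w (ρh n j) k) ≤ Vmax := by
      intro ha hb
      have hjm : j - 1 ∈ Finset.Icc 1 M := Finset.mem_Icc.mpr ⟨ha, by omega⟩
      have hjj : j - 1 + 1 = j := by omega
      rw [hjj]
      have hA := hDj (j-1) hjm
      have hW := hDj j hj
      have haa := hn (j-1) hjm k
      exact ⟨haa.1, haa.2, hv_nonneg _ hjm _ hA, hvle _ hjm _ hA,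
        hv_nonneg j hj _ hW, hvle j hj _ hW⟩
    have hc2 : 1 ≤ j → j + 1 ≤ M →
        0 ≤ ρh n (j+1) k ∧ ρh n (j+1) k ≤ 1 ∧
        0 ≤ v j (dconv dx w (ρh n j) k) ∧
        v j (dconv dx w (ρh n j) k) ≤ Vmax ∧
        0 ≤ v (j+1) (dconv dx w (ρh n (j+1)) k) ∧
        v (j+1) (dconv dx w (ρh n (j+1)) k) ≤ Vmax := by
      intro ha hb
      have hjp : j + 1 ∈ Finset.Icc 1 M := Finset.mem_Icc.mpr ⟨by omega, hb⟩
      have hW := hDj j hj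
      have hB := hDj (j+1) hjp
      have hbb := hn (j+1) hjp k
      exact ⟨hbb.1, hbb.2, hv_nonneg j hj _ hW, hvle j hj _ hW,
        hv_nonneg _ hjp _ hB, hvle _ hjp _ hB⟩
    have hS1 := mySrc_bounds_w M (j-1) v (ρh n (j-1) k) (ρh n j k)
        (dconv dx w (ρh n (j-1)) k) (dconv dx w (ρh n j) k) Vmax hVnn hu.1 hu.2 hc1
    have hS2 := mySrc_bounds_u M j v (ρh n j k) (ρh n (j+1) k)
        (dconv dx w (ρh n j) k) (dconv dx w (ρh n (j+1)) k) Vmax hVnn hu.1 hu.2 hc2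
    exact myRelax _ _ _ dt Vmax hu.1 hu.2 (le_of_lt hdt) hdtK hS1.1 hS1.2 hS2.1 hS2.2
  have hall : ∀ n, ∀ j ∈ Finset.Icc 1 M, ∀ k, ρ n j k ∈ Set.Icc (0:ℝ) 1 := by
    intro n
    induction n with
    | zero => exact hbase
    | succ m ih => exact hrelaxmem m (hconvmem m ih)
  intro n j hj k
  exact ⟨hall n j hj k, hconvmem n (hall n) j hj k⟩
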